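/- The sum-DB prior density for the exponential scale model, π^S(μ) = c^{-1}(1 + (μ-μ₀)²/(μμ₀))^{-1/2} μ^{-1}, has median μ₀ and has no finite mean: ∫₀^∞ μ π^S(μ) dμ = ∞. -/

import Mathlib

open Real MeasureTheory Set ENNReal

noncomputable def esF (μ₀ μ : ℝ) : ℝ := (1 + (μ - μ₀)^2 / (μ * μ₀)) ^ (-(1:ℝ)/2) / μ

lemma esF_meas (μ₀ : ℝ) : Measurable (esF μ₀) := by unfold esF; fun_prop

lemma esBase_pos {μ₀ : ℝ} (hμ₀ : 0 < μ₀) {μ : ℝ} (hμ : 0 < μ) :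
    0 < 1 + (μ - μ₀)^2 / (μ * μ₀) := by
  have : 0 ≤ (μ - μ₀)^2 / (μ * μ₀) := div_nonneg (sq_nonneg _) (mul_pos hμ hμ₀).le
  linarith

lemma esF_pos {μ₀ : ℝ} (hμ₀ : 0 < μ₀) {μ : ℝ} (hμ : 0 < μ) : 0 < esF μ₀ μ :=
  div_pos (Real.rpow_pos_of_pos (esBase_pos hμ₀ hμ) _) hμ

lemma rpow_half_anti {x y : ℝ} (hx : 0 < x) (hxy : x ≤ y) :
    y ^ (-(1:ℝ)/2) ≤ x ^ (-(1:ℝ)/2) :=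
  Real.rpow_le_rpow_of_nonpos hx hxy (by norm_num)

lemma esBase_eq {μ₀ : ℝ} (hμ₀ : 0 < μ₀) {μ : ℝ} (hμ : 0 < μ) :
    1 + (μ - μ₀)^2 / (μ * μ₀) = (μ^2 - μ*μ₀ + μ₀^2) / (μ * μ₀) := by
  field_simp
  ring

-- bound on (0, μ₀]: esF μ ≤ (μ₀/2)^(-1/2) * μ^(-1/2)
lemma esF_le_low {μ₀ : ℝ} (hμ₀ : 0 < μ₀) {μ : ℝ} (hμ : 0 < μ) :
    esF μ₀ μ ≤ (μ₀/2) ^ (-(1:ℝ)/2) * μ ^ (-(1:ℝ)/2) := by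
  have hB : (μ₀/2) * μ⁻¹ ≤ 1 + (μ - μ₀)^2 / (μ * μ₀) := by
    rw [esBase_eq hμ₀ hμ, le_div_iff₀ (mul_pos hμ hμ₀)]
    have h2 : (μ₀/2) * μ⁻¹ * (μ * μ₀) = μ₀^2/2 := by field_simp
    rw [h2]
    nlinarith [sq_nonneg (μ - μ₀), sq_nonneg μ]
  have h1 : (1 + (μ - μ₀)^2 / (μ * μ₀)) ^ (-(1:ℝ)/2) ≤ ((μ₀/2) * μ⁻¹) ^ (-(1:ℝ)/2) :=
    rpow_half_anti (by positivity) hB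
  have h2 : ((μ₀/2) * μ⁻¹) ^ (-(1:ℝ)/2) = (μ₀/2) ^ (-(1:ℝ)/2) * μ ^ ((1:ℝ)/2) := by
    rw [Real.mul_rpow (by positivity) (by positivity), ← Real.rpow_neg_one μ,
      ← Real.rpow_mul hμ.le]
    norm_num
  have h3 : μ ^ ((1:ℝ)/2) / μ = μ ^ (-(1:ℝ)/2) := by
    rw [show μ ^ ((1:ℝ)/2) / μ = μ ^ ((1:ℝ)/2) / μ ^ (1:ℝ) by rw [Real.rpow_one],
      ← Real.rpow_sub hμ]
    norm_num
  calc esF μ₀ μ ≤ ((μ₀/2) * μ⁻¹) ^ (-(1:ℝ)/2) / μ := by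
        unfold esF; gcongr
    _ = (μ₀/2) ^ (-(1:ℝ)/2) * μ ^ (-(1:ℝ)/2) := by
        rw [h2, mul_div_assoc, h3]


-- bound on (μ₀, ∞) (in fact all μ>0): esF μ ≤ (1/(2μ₀))^(-1/2) * μ^(-3/2)
lemma esF_le_high {μ₀ : ℝ} (hμ₀ : 0 < μ₀) {μ : ℝ} (hμ : 0 < μ) :
    esF μ₀ μ ≤ (1/(2*μ₀)) ^ (-(1:ℝ)/2) * μ ^ (-(3:ℝ)/2) := by
  have hB : (1/(2*μ₀)) * μ ≤ 1 + (μ - μ₀)^2 / (μ * μ₀) := by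
    rw [esBase_eq hμ₀ hμ, le_div_iff₀ (mul_pos hμ hμ₀)]
    have h2 : (1/(2*μ₀)) * μ * (μ * μ₀) = μ^2/2 := by field_simp
    rw [h2]
    nlinarith [sq_nonneg (μ - μ₀), sq_nonneg μ₀]
  have h1 : (1 + (μ - μ₀)^2 / (μ * μ₀)) ^ (-(1:ℝ)/2) ≤ ((1/(2*μ₀)) * μ) ^ (-(1:ℝ)/2) :=
    rpow_half_anti (by positivity) hB
  have h2 : ((1/(2*μ₀)) * μ) ^ (-(1:ℝ)/2) = (1/(2*μ₀)) ^ (-(1:ℝ)/2) * μ ^ (-(1:ℝ)/2) :=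
    Real.mul_rpow (by positivity) hμ.le
  have h3 : μ ^ (-(1:ℝ)/2) / μ = μ ^ (-(3:ℝ)/2) := by
    rw [show μ ^ (-(1:ℝ)/2) / μ = μ ^ (-(1:ℝ)/2) / μ ^ (1:ℝ) by rw [Real.rpow_one],
      ← Real.rpow_sub hμ]
    norm_num
  calc esF μ₀ μ ≤ ((1/(2*μ₀)) * μ) ^ (-(1:ℝ)/2) / μ := by unfold esF; gcongr
    _ = (1/(2*μ₀)) ^ (-(1:ℝ)/2) * μ ^ (-(3:ℝ)/2) := by rw [h2, mul_div_assoc, h3]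

-- lower bound for μ ≥ μ₀
lemma esG_ge {μ₀ : ℝ} (hμ₀ : 0 < μ₀) {μ : ℝ} (hle : μ₀ ≤ μ) :
    (2/μ₀) ^ (-(1:ℝ)/2) * μ ^ (-(1:ℝ)/2) ≤ (1 + (μ - μ₀)^2 / (μ * μ₀)) ^ (-(1:ℝ)/2) := by
  have hμ : 0 < μ := lt_of_lt_of_le hμ₀ hle
  have hB : 1 + (μ - μ₀)^2 / (μ * μ₀) ≤ (2/μ₀) * μ := by
    rw [esBase_eq hμ₀ hμ, div_le_iff₀ (mul_pos hμ hμ₀)]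
    have h2 : (2/μ₀) * μ * (μ * μ₀) = 2*μ^2 := by field_simp
    rw [h2]
    nlinarith
  have h1 : ((2/μ₀) * μ) ^ (-(1:ℝ)/2) ≤ (1 + (μ - μ₀)^2 / (μ * μ₀)) ^ (-(1:ℝ)/2) :=
    rpow_half_anti (esBase_pos hμ₀ hμ) hB
  calc (2/μ₀) ^ (-(1:ℝ)/2) * μ ^ (-(1:ℝ)/2) = ((2/μ₀) * μ) ^ (-(1:ℝ)/2) :=
        (Real.mul_rpow (by positivity) hμ.le).symm
    _ ≤ _ := h1

lemma esF_intOn_Ioc {μ₀ : ℝ} (hμ₀ : 0 < μ₀) : IntegrableOn (esF μ₀) (Ioc 0 μ₀) := by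
  have hdom : IntegrableOn (fun μ : ℝ => (μ₀/2) ^ (-(1:ℝ)/2) * μ ^ (-(1:ℝ)/2)) (Ioc 0 μ₀) := by
    have h := (intervalIntegral.intervalIntegrable_rpow' (a := (0:ℝ)) (b := μ₀) (r := -(1:ℝ)/2) (by norm_num))
    rw [intervalIntegrable_iff_integrableOn_Ioc_of_le hμ₀.le] at h
    exact h.const_mul _
  refine hdom.mono' ((esF_meas μ₀).aestronglyMeasurable) ?_
  rw [ae_restrict_iff' measurableSet_Ioc]
  filter_upwards with μ hμ
  rw [Real.norm_eq_abs, abs_of_nonneg (esF_pos hμ₀ hμ.1).le]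
  exact esF_le_low hμ₀ hμ.1

lemma esF_intOn_Ioi {μ₀ : ℝ} (hμ₀ : 0 < μ₀) : IntegrableOn (esF μ₀) (Ioi μ₀) := by
  have hdom : IntegrableOn (fun μ : ℝ => (1/(2*μ₀)) ^ (-(1:ℝ)/2) * μ ^ (-(3:ℝ)/2)) (Ioi μ₀) :=
    (integrableOn_Ioi_rpow_of_lt (by norm_num) hμ₀).const_mul _
  refine hdom.mono' ((esF_meas μ₀).aestronglyMeasurable) ?_
  rw [ae_restrict_iff' measurableSet_Ioi]
  filter_upwards with μ hμ
  have hμ0 : 0 < μ := hμ₀.trans hμ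
  rw [Real.norm_eq_abs, abs_of_nonneg (esF_pos hμ₀ hμ0).le]
  exact esF_le_high hμ₀ hμ0

lemma esF_intOn_Ioi0 {μ₀ : ℝ} (hμ₀ : 0 < μ₀) : IntegrableOn (esF μ₀) (Ioi 0) := by
  rw [← Ioc_union_Ioi_eq_Ioi hμ₀.le]
  exact (esF_intOn_Ioc hμ₀).union (esF_intOn_Ioi hμ₀)

lemma esF_symm {μ₀ : ℝ} (hμ₀ : 0 < μ₀) :
    ∫ μ in Ioo (0:ℝ) μ₀, esF μ₀ μ = ∫ μ in Ioi μ₀, esF μ₀ μ := by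
  have himg : (fun μ : ℝ => μ₀^2 / μ) '' Ioi μ₀ = Ioo 0 μ₀ := by
    ext y
    simp only [mem_image, mem_Ioi, mem_Ioo]
    constructor
    · rintro ⟨x, hx, rfl⟩
      have hx0 : 0 < x := hμ₀.trans hx
      refine ⟨by positivity, ?_⟩
      rw [div_lt_iff₀ hx0]
      nlinarith
    · rintro ⟨hy0, hy1⟩
      refine ⟨μ₀^2 / y, ?_, ?_⟩
      · rw [lt_div_iff₀ hy0]; nlinarith
      · field_simp
  have hderiv : ∀ x ∈ Ioi μ₀,
      HasDerivWithinAt (fun μ : ℝ => μ₀^2 / μ) (-(μ₀^2 / x^2)) (Ioi μ₀) x := by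
    intro x hx
    have hx0 : x ≠ 0 := (hμ₀.trans hx).ne'
    have h := ((hasDerivAt_inv hx0).const_mul (μ₀^2)).hasDerivWithinAt (s := Ioi μ₀)
    have : μ₀ ^ 2 * -(x ^ 2)⁻¹ = -(μ₀^2 / x^2) := by field_simp
    rw [this] at h
    simpa [div_eq_mul_inv] using h
  have hinj : InjOn (fun μ : ℝ => μ₀^2 / μ) (Ioi μ₀) := by
    intro a ha b hb hab
    simp only [mem_Ioi] at ha hb
    have ha0 : a ≠ 0 := (hμ₀.trans ha).ne'
    have hb0 : b ≠ 0 := (hμ₀.trans hb).ne'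
    field_simp at hab
    exact hab.symm
  rw [← himg, integral_image_eq_integral_abs_deriv_smul measurableSet_Ioi hderiv hinj]
  refine setIntegral_congr_fun measurableSet_Ioi fun x hx => ?_
  have hx0 : 0 < x := hμ₀.trans hx
  have habs : |(-(μ₀^2 / x^2))| = μ₀^2 / x^2 := by rw [abs_neg, abs_of_pos (by positivity)]
  rw [habs, smul_eq_mul]
  unfold esF
  have hbase : (μ₀^2/x - μ₀)^2 / ((μ₀^2/x) * μ₀) = (x - μ₀)^2 / (x * μ₀) := by
    field_simp
    ring
  rw [hbase]
  field_simp

lemma esI_pos {μ₀ : ℝ} (hμ₀ : 0 < μ₀) : 0 < ∫ μ in Ioc (0:ℝ) μ₀, esF μ₀ μ := by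
  refine (setIntegral_pos_iff_support_of_nonneg_ae ?_ (esF_intOn_Ioc hμ₀)).mpr ?_
  · filter_upwards [ae_restrict_mem measurableSet_Ioc] with μ hμ
    exact (esF_pos hμ₀ hμ.1).le
  · have hsub : Ioc (0:ℝ) μ₀ ⊆ Function.support (esF μ₀) ∩ Ioc 0 μ₀ := by
      intro μ hμ
      exact ⟨(esF_pos hμ₀ hμ.1).ne', hμ⟩
    calc (0:ℝ≥0∞) < volume (Ioc (0:ℝ) μ₀) := by
          rw [Real.volume_Ioc]; simp [hμ₀, ENNReal.ofReal_pos]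
      _ ≤ _ := measure_mono hsub

/-- The sum-DB prior density for the exponential scale model,
`π^S(μ) = c⁻¹ (1 + (μ-μ₀)²/(μμ₀))^{-1/2} μ^{-1}` on `(0,∞)`, has median `μ₀`
and no finite mean. -/
theorem expScale_sumDB_median_noMean (μ₀ : ℝ) (hμ₀ : 0 < μ₀) (c : ℝ)
    (hc : c = ∫ μ in Set.Ioi (0:ℝ), (1 + (μ - μ₀)^2 / (μ * μ₀)) ^ (-(1:ℝ)/2) / μ) :
    (∫ μ in Set.Ioc (0:ℝ) μ₀,
        c⁻¹ * ((1 + (μ - μ₀)^2 / (μ * μ₀)) ^ (-(1:ℝ)/2) / μ)) = 1/2 ∧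
    ¬ IntegrableOn
        (fun μ : ℝ => μ * (c⁻¹ * ((1 + (μ - μ₀)^2 / (μ * μ₀)) ^ (-(1:ℝ)/2) / μ)))
        (Set.Ioi 0) := by
  set I := ∫ μ in Ioc (0:ℝ) μ₀, esF μ₀ μ with hI
  have hIpos := esI_pos hμ₀
  have hsplit : c = I + ∫ μ in Ioi μ₀, esF μ₀ μ := by
    rw [hc]
    have : (∫ μ in Set.Ioi (0:ℝ), (1 + (μ - μ₀)^2 / (μ * μ₀)) ^ (-(1:ℝ)/2) / μ)
        = ∫ μ in Ioi (0:ℝ), esF μ₀ μ := rfl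
    rw [this, ← Ioc_union_Ioi_eq_Ioi hμ₀.le,
      setIntegral_union (Ioc_disjoint_Ioi le_rfl) measurableSet_Ioi
        (esF_intOn_Ioc hμ₀) (esF_intOn_Ioi hμ₀)]
  have hIoo : (∫ μ in Ioi μ₀, esF μ₀ μ) = I := by
    rw [← esF_symm hμ₀, hI, integral_Ioc_eq_integral_Ioo]
  rw [hIoo] at hsplit
  have hcI : c = 2 * I := by linarith
  have hcpos : 0 < c := by linarith
  constructor
  · have : (∫ μ in Set.Ioc (0:ℝ) μ₀,
        c⁻¹ * ((1 + (μ - μ₀)^2 / (μ * μ₀)) ^ (-(1:ℝ)/2) / μ))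
        = ∫ μ in Set.Ioc (0:ℝ) μ₀, c⁻¹ * esF μ₀ μ := rfl
    rw [this, integral_const_mul, ← hI, hcI]
    field_simp
    exact mul_inv_cancel₀ (show I ≠ 0 from hIpos.ne')
  · intro h
    have h2 : IntegrableOn
        (fun μ : ℝ => (1 + (μ - μ₀)^2 / (μ * μ₀)) ^ (-(1:ℝ)/2)) (Ioi μ₀) := by
      have h3 := (h.mono_set (Ioi_subset_Ioi hμ₀.le)).const_mul c
      refine IntegrableOn.congr_fun h3 (fun μ hμ => ?_) measurableSet_Ioi
      have hμ0 : (0:ℝ) < μ := hμ₀.trans hμ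
      show c * (μ * (c⁻¹ * ((1 + (μ - μ₀)^2 / (μ * μ₀)) ^ (-(1:ℝ)/2) / μ))) = _
      field_simp
    have h4 : IntegrableOn
        (fun μ : ℝ => (2/μ₀) ^ (-(1:ℝ)/2) * μ ^ (-(1:ℝ)/2)) (Ioi μ₀) := by
      refine h2.mono'
        (((by fun_prop : Measurable (fun μ : ℝ => μ ^ (-(1:ℝ)/2))).const_mul
          _).aestronglyMeasurable) ?_
      rw [ae_restrict_iff' measurableSet_Ioi]
      filter_upwards with μ hμ
      have hμ0 : (0:ℝ) < μ := hμ₀.trans hμ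
      rw [Real.norm_eq_abs, abs_of_nonneg (by positivity)]
      exact esG_ge hμ₀ (le_of_lt hμ)
    have hk : ((2:ℝ)/μ₀) ^ (-(1:ℝ)/2) ≠ 0 := (Real.rpow_pos_of_pos (by positivity) _).ne'
    have h5 : IntegrableOn (fun μ : ℝ => μ ^ (-(1:ℝ)/2)) (Ioi μ₀) := by
      have h6 := h4.const_mul (((2:ℝ)/μ₀) ^ (-(1:ℝ)/2))⁻¹
      refine IntegrableOn.congr_fun h6 (fun μ hμ => ?_) measurableSet_Ioi
      show (((2:ℝ)/μ₀) ^ (-(1:ℝ)/2))⁻¹ * ((2/μ₀) ^ (-(1:ℝ)/2) * μ ^ (-(1:ℝ)/2)) = _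
      rw [← mul_assoc, inv_mul_cancel₀ hk, one_mul]
    rw [integrableOn_Ioi_rpow_iff hμ₀] at h5
    norm_num at h5
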